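/- Second-order tail expansion of the GLMGA distribution: for all σ, a, b > 0, letting F̄(y) = ∫_y^∞ f_{σ,a,b}(t) dt and C = 2 / ( (2b)^{1/2} · B(a, 1/2) ), one has lim_{y→∞} y^{1/σ} · ( F̄(y) / (C · y^{-1/(2σ)}) − 1 ) = −(2a + 1)/(12b). -/

import Mathlib

open MeasureTheory Real Filter Topology

/-- The (real) beta function `B(m,n) = ∫_0^1 t^(m-1) (1-t)^(n-1) dt`. -/
noncomputable def betaFn (m n : ℝ) : ℝ :=
  ∫ t in (0:ℝ)..1, t ^ (m - 1) * (1 - t) ^ (n - 1)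

/-- The regularized incomplete beta function `I_{m,n}(v)`. -/
noncomputable def regIncBeta (m n v : ℝ) : ℝ :=
  (∫ t in (0:ℝ)..v, t ^ (m - 1) * (1 - t) ^ (n - 1)) / betaFn m n

/-- The GLMGA density `f_{σ,a,b}`. -/
noncomputable def glmga (σ a b y : ℝ) : ℝ :=
  (2 * b) ^ a / (σ * betaFn a (1 / 2)) * y ^ (-(1 / (2 * σ) + 1))
    / (y ^ (-1 / σ) + 2 * b) ^ (a + 1 / 2)

open Set in
lemma betaHalfIntegrable {m n : ℝ} (hm : 0 < m) :
    IntervalIntegrable (fun t : ℝ => t ^ (m - 1) * (1 - t) ^ (n - 1)) volume 0 (1/2) := by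
  set M : ℝ := (2:ℝ) ^ |n - 1| with hM
  have hM1 : (1:ℝ) ≤ M := Real.one_le_rpow one_le_two (abs_nonneg _)
  have key : ∀ t ∈ Set.Ioc (0:ℝ) (1/2), (1 - t) ^ (n-1) ≤ M := by
    intro t ht
    have h1 : (1:ℝ)/2 ≤ 1 - t := by linarith [ht.2]
    have h2 : 1 - t ≤ 1 := by linarith [ht.1]
    rcases le_or_gt 0 (n-1) with h | h
    · calc (1-t)^(n-1) ≤ 1 := Real.rpow_le_one (by linarith) h2 h
        _ ≤ M := hM1
    · have h3 : (1-t)^(n-1) ≤ ((1:ℝ)/2)^(n-1) :=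
        Real.rpow_le_rpow_of_nonpos (by norm_num) h1 h.le
      have h4 : ((1:ℝ)/2)^(n-1) = M := by
        rw [hM, abs_of_neg h, show ((1:ℝ)/2) = 2⁻¹ by norm_num,
          Real.inv_rpow (by norm_num), ← Real.rpow_neg (by norm_num)]
      linarith
  have hcont : ContinuousOn (fun t : ℝ => t ^ (m - 1) * (1 - t) ^ (n - 1)) (Set.Ioc 0 (1/2)) := by
    intro t ht
    have h1 : ContinuousAt (fun t : ℝ => t ^ (m-1)) t :=
      Real.continuousAt_rpow_const t _ (Or.inl ht.1.ne')
    have h2 : ContinuousAt (fun t : ℝ => (1 - t) ^ (n-1)) t :=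
      ContinuousAt.rpow_const (continuousAt_const.sub continuousAt_id)
        (Or.inl (sub_ne_zero.mpr (by linarith [ht.2] : (1:ℝ) ≠ t)))
    exact (h1.mul h2).continuousWithinAt
  refine IntervalIntegrable.mono_fun
    ((intervalIntegral.intervalIntegrable_rpow' (by linarith : (-1:ℝ) < m - 1)).const_mul M)
    ?_ ?_
  · rw [uIoc_of_le (by norm_num : (0:ℝ) ≤ 1/2)]
    exact hcont.aestronglyMeasurable measurableSet_Ioc
  · rw [uIoc_of_le (by norm_num : (0:ℝ) ≤ 1/2)]
    filter_upwards [ae_restrict_mem measurableSet_Ioc] with t ht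
    have ht0 : 0 < t := ht.1
    have h1t : 0 < 1 - t := by linarith [ht.2]
    rw [Real.norm_eq_abs, Real.norm_eq_abs,
      abs_of_nonneg (by positivity : (0:ℝ) ≤ t ^ (m-1) * (1-t)^(n-1)),
      abs_of_nonneg (by positivity : (0:ℝ) ≤ M * t ^ (m-1))]
    calc t ^ (m-1) * (1-t)^(n-1) ≤ t ^ (m-1) * M :=
          mul_le_mul_of_nonneg_left (key t ht) (by positivity)
      _ = M * t ^ (m-1) := mul_comm _ _

lemma betaIntegrable {m n : ℝ} (hm : 0 < m) (hn : 0 < n) :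
    IntervalIntegrable (fun t : ℝ => t ^ (m - 1) * (1 - t) ^ (n - 1)) volume 0 1 := by
  have h1 := betaHalfIntegrable (n := n) hm
  have h2 := betaHalfIntegrable (n := m) hn
  have h3 := h2.comp_sub_left 1
  have heq : (fun x : ℝ => (fun t : ℝ => t ^ (n - 1) * (1 - t) ^ (m - 1)) (1 - x))
      = fun x : ℝ => x ^ (m - 1) * (1 - x) ^ (n - 1) := by
    funext x; simp only [sub_sub_cancel]; rw [mul_comm]
  rw [heq] at h3
  norm_num at h3
  exact h1.trans h3.symm

lemma betaFn_pos' {m n : ℝ} (hm : 0 < m) (hn : 0 < n) : 0 < betaFn m n :=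
  intervalIntegral.intervalIntegral_pos_of_pos_on (betaIntegrable hm hn)
    (fun t ht => mul_pos (Real.rpow_pos_of_pos ht.1 _)
      (Real.rpow_pos_of_pos (by linarith [ht.2]) _)) one_pos

lemma aux1 (F C P Q R : ℝ) (hC : C ≠ 0) (hP : P ≠ 0) (hQ : Q ≠ 0) (hPQR : P = Q * R) :
    (F - C * P) / (C * Q) = R * (F / (C * P) - 1) := by
  subst hPQR; have hR : R ≠ 0 := right_ne_zero_of_mul hP; field_simp

lemma aux2 (K C s A E x y3 R : ℝ) (hC : C ≠ 0) (hs : s ≠ 0) (hy3 : y3 ≠ 0)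
    (hx : x ≠ 0) (hCsK : C * s = K * E) (hRx : R * x = 1) :
    K / (3*s*C) * ((A - E)/x) = (-(K * (y3 * R) * A) - C * (-s * (y3 * R))) / (C * (-(3*s) * y3)) := by
  have hR : R = x⁻¹ := eq_inv_of_mul_eq_one_left hRx
  subst hR
  have h1 : C * (-s * (y3 * x⁻¹)) = -(K*E) * (y3 * x⁻¹) := by rw [← hCsK]; ring
  rw [h1]
  field_simp
  ring

/-- second-order tail expansion of the GLMGA distribution. -/
theorem glmga_tail_second_order (σ a b : ℝ) (hσ : 0 < σ) (ha : 0 < a) (hb : 0 < b) :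
    Tendsto
      (fun y : ℝ => y ^ (1 / σ) *
        ((∫ t in Set.Ioi y, glmga σ a b t) /
            ((2 / ((2 * b) ^ ((1:ℝ) / 2) * betaFn a (1 / 2))) * y ^ (-(1 / (2 * σ)))) - 1))
      atTop (𝓝 (-(2 * a + 1) / (12 * b))) := by
  have h2b : (0:ℝ) < 2 * b := by linarith
  have hB : 0 < betaFn a (1/2) := betaFn_pos' ha one_half_pos
  have hσ' : σ ≠ 0 := hσ.ne'
  set f : ℝ → ℝ := glmga σ a b with hfdef
  set C : ℝ := 2 / ((2 * b) ^ ((1:ℝ) / 2) * betaFn a (1 / 2)) with hCdef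
  set K : ℝ := (2 * b) ^ a / (σ * betaFn a (1 / 2)) with hKdef
  have h2bh : 0 < (2*b) ^ ((1:ℝ)/2) := Real.rpow_pos_of_pos h2b _
  have h2ba : 0 < (2*b) ^ a := Real.rpow_pos_of_pos h2b _
  have hC0 : 0 < C := by rw [hCdef]; positivity
  have hK0 : 0 < K := by rw [hKdef]; positivity
  set s : ℝ := 1 / (2 * σ) with hsdef
  have hs0 : 0 < s := by rw [hsdef]; positivity
  set p : ℝ := a + 1 / 2 with hpdef
  have hp0 : 0 < p := by rw [hpdef]; linarith
  -- normal form of the density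
  have hfy : ∀ y : ℝ, 0 < y → f y = K * y ^ (-s-1) * (y ^ (-1/σ) + 2*b) ^ (-p) := by
    intro y hy
    have hden : (0:ℝ) < y ^ (-1/σ) + 2*b := add_pos (Real.rpow_pos_of_pos hy _) h2b
    show glmga σ a b y = _
    rw [glmga, Real.rpow_neg hden.le,
      show -(1/(2*σ)+1) = -s-1 by rw [hsdef]; ring, ← hKdef, ← hpdef, div_eq_mul_inv]
  have hfpos : ∀ y : ℝ, 0 < y → 0 < f y := by
    intro y hy
    have hden : (0:ℝ) < y ^ (-1/σ) + 2*b := add_pos (Real.rpow_pos_of_pos hy _) h2b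
    rw [hfy y hy]
    exact mul_pos (mul_pos hK0 (Real.rpow_pos_of_pos hy _)) (Real.rpow_pos_of_pos hden _)
  -- continuity
  have hfc : ∀ y : ℝ, 0 < y → ContinuousAt f y := by
    intro y hy
    have hden : (0:ℝ) < y ^ (-1/σ) + 2*b := add_pos (Real.rpow_pos_of_pos hy _) h2b
    have h1 : ContinuousAt (fun z : ℝ => z ^ (-(1/(2*σ)+1))) y :=
      Real.continuousAt_rpow_const y _ (Or.inl hy.ne')
    have h2 : ContinuousAt (fun z : ℝ => (z ^ (-1/σ) + 2*b) ^ (a+1/2)) y :=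
      ContinuousAt.rpow_const
        ((Real.continuousAt_rpow_const y _ (Or.inl hy.ne')).add continuousAt_const)
        (Or.inl hden.ne')
    have h3 : ContinuousAt (fun z : ℝ =>
        (2*b) ^ a / (σ * betaFn a (1/2)) * z ^ (-(1/(2*σ)+1))
          / (z ^ (-1/σ) + 2*b) ^ (a+1/2)) y :=
      (continuousAt_const.mul h1).div h2 (Real.rpow_pos_of_pos hden _).ne'
    exact h3
  have hfco : ContinuousOn f (Set.Ioi 0) := fun y hy => (hfc y hy).continuousWithinAt
  have hmeas0 : AEStronglyMeasurable f (volume.restrict (Set.Ioi (0:ℝ))) :=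
    hfco.aestronglyMeasurable measurableSet_Ioi
  -- integrability on Ioi 1
  have hint : IntegrableOn f (Set.Ioi (1:ℝ)) := by
    have hg : IntegrableOn (fun t : ℝ => (K * (2*b) ^ (-p)) * t ^ (-s-1)) (Set.Ioi 1) :=
      (integrableOn_Ioi_rpow_of_lt (by linarith) one_pos).const_mul _
    refine hg.mono'
      ((hfco.mono (Set.Ioi_subset_Ioi zero_le_one)).aestronglyMeasurable measurableSet_Ioi) ?_
    filter_upwards [ae_restrict_mem measurableSet_Ioi] with t ht
    have ht0 : (0:ℝ) < t := lt_trans one_pos ht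
    have hden : (0:ℝ) < t ^ (-1/σ) + 2*b := add_pos (Real.rpow_pos_of_pos ht0 _) h2b
    have hb1 : (t ^ (-1/σ) + 2*b) ^ (-p) ≤ (2*b) ^ (-p) :=
      Real.rpow_le_rpow_of_nonpos h2b
        (le_add_of_nonneg_left (Real.rpow_nonneg ht0.le _)) (by linarith)
    rw [Real.norm_eq_abs, abs_of_pos (hfpos t ht0), hfy t ht0]
    calc K * t ^ (-s-1) * (t ^ (-1/σ) + 2*b) ^ (-p)
        ≤ K * t ^ (-s-1) * (2*b) ^ (-p) :=
          mul_le_mul_of_nonneg_left hb1 (mul_pos hK0 (Real.rpow_pos_of_pos ht0 _)).le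
      _ = (K * (2*b) ^ (-p)) * t ^ (-s-1) := by ring
  -- tail formula
  have htail : ∀ y : ℝ, 1 ≤ y →
      (∫ t in Set.Ioi y, f t) = (∫ t in Set.Ioi (1:ℝ), f t) - ∫ t in (1:ℝ)..y, f t := by
    intro y hy
    have hsplit : Set.Ioc (1:ℝ) y ∪ Set.Ioi y = Set.Ioi 1 := Set.Ioc_union_Ioi_eq_Ioi hy
    have h := setIntegral_union (Set.Ioc_disjoint_Ioi le_rfl) measurableSet_Ioi
      (hint.mono_set (by rw [← hsplit]; exact Set.subset_union_left))
      (hint.mono_set (by rw [← hsplit]; exact Set.subset_union_right))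
    rw [hsplit] at h
    rw [intervalIntegral.integral_of_le hy]
    linarith [h]
  -- tail tends to zero
  have hF0 : Tendsto (fun y : ℝ => ∫ t in Set.Ioi y, f t) atTop (𝓝 0) := by
    have h1 : Tendsto (fun y : ℝ => ∫ t in (1:ℝ)..y, f t) atTop
        (𝓝 (∫ t in Set.Ioi (1:ℝ), f t)) :=
      intervalIntegral_tendsto_integral_Ioi 1 hint tendsto_id
    have h2 : Tendsto (fun y : ℝ => (∫ t in Set.Ioi (1:ℝ), f t) - ∫ t in (1:ℝ)..y, f t)
        atTop (𝓝 0) := by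
      simpa using (tendsto_const_nhds (x := ∫ t in Set.Ioi (1:ℝ), f t)).sub h1
    refine h2.congr' ?_
    filter_upwards [eventually_ge_atTop 1] with y hy
    exact (htail y hy).symm
  -- derivative of the tail
  have hFd : ∀ y : ℝ, 1 < y →
      HasDerivAt (fun z : ℝ => ∫ t in Set.Ioi z, f t) (-(f y)) y := by
    intro y hy
    have hy0 : (0:ℝ) < y := lt_trans one_pos hy
    have hii : IntervalIntegrable f volume 1 y := by
      apply (hfco.mono ?_).intervalIntegrable
      rw [Set.uIcc_of_le hy.le]
      exact fun t ht => lt_of_lt_of_le one_pos ht.1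
    have hd : HasDerivAt (fun z : ℝ => ∫ t in (1:ℝ)..z, f t) (f y) y :=
      intervalIntegral.integral_hasDerivAt_right hii
        ⟨Set.Ioi 0, Ioi_mem_nhds hy0, hmeas0⟩ (hfc y hy0)
    have hd2 : HasDerivAt (fun z : ℝ => (∫ t in Set.Ioi (1:ℝ), f t) - ∫ t in (1:ℝ)..z, f t)
        (-(f y)) y := hd.const_sub _
    apply hd2.congr_of_eventuallyEq
    filter_upwards [Ioi_mem_nhds hy] with z hz
    exact htail z (le_of_lt hz)
  -- key algebraic constants
  have hBne : betaFn a (1/2) ≠ 0 := hB.ne'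
  have hCsK : C * s = K * (2*b) ^ (-p) := by
    rw [hCdef, hKdef, hsdef, Real.rpow_neg h2b.le, hpdef, Real.rpow_add h2b]
    field_simp
  have hKeq : K = C * s * (2*b) ^ p := by
    have h2 : (2*b) ^ (-p) * (2*b) ^ p = 1 := by
      rw [← Real.rpow_add h2b]; simp
    calc K = K * ((2*b) ^ (-p) * (2*b) ^ p) := by rw [h2, mul_one]
      _ = (K * (2*b) ^ (-p)) * (2*b) ^ p := by ring
      _ = C * s * (2*b) ^ p := by rw [← hCsK]
  -- derivative hypotheses for L'Hopital
  have hN' : ∀ᶠ y in atTop, HasDerivAt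
      (fun z : ℝ => (∫ t in Set.Ioi z, f t) - C * z ^ (-s))
      (-(f y) - C * (-s * y ^ (-s - 1))) y := by
    filter_upwards [eventually_gt_atTop 1] with y hy
    have hy0 : (0:ℝ) < y := lt_trans one_pos hy
    exact (hFd y hy).sub
      ((Real.hasDerivAt_rpow_const (p := -s) (Or.inl hy0.ne')).const_mul C)
  have hD' : ∀ᶠ y in atTop, HasDerivAt (fun z : ℝ => C * z ^ (-(3*s)))
      (C * (-(3*s) * y ^ (-(3*s) - 1))) y := by
    filter_upwards [eventually_gt_atTop 1] with y hy
    have hy0 : (0:ℝ) < y := lt_trans one_pos hy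
    exact (Real.hasDerivAt_rpow_const (p := -(3*s)) (Or.inl hy0.ne')).const_mul C
  have hD'ne : ∀ᶠ y in atTop, C * (-(3*s) * y ^ (-(3*s) - 1)) ≠ 0 := by
    filter_upwards [eventually_gt_atTop 1] with y hy
    have hy0 : (0:ℝ) < y := lt_trans one_pos hy
    exact mul_ne_zero hC0.ne' (mul_ne_zero (by linarith : -(3*s) ≠ 0)
      (Real.rpow_pos_of_pos hy0 _).ne')
  have hN0 : Tendsto (fun y : ℝ => (∫ t in Set.Ioi y, f t) - C * y ^ (-s)) atTop (𝓝 0) := by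
    have a1 : Tendsto (fun y : ℝ => C * y ^ (-s)) atTop (𝓝 (C * 0)) :=
      (tendsto_rpow_neg_atTop hs0).const_mul C
    simpa using hF0.sub a1
  have hD0 : Tendsto (fun y : ℝ => C * y ^ (-(3*s))) atTop (𝓝 0) := by
    have a1 : Tendsto (fun y : ℝ => C * y ^ (-(3*s))) atTop (𝓝 (C * 0)) :=
      (tendsto_rpow_neg_atTop (by linarith : (0:ℝ) < 3*s)).const_mul C
    simpa using a1
  -- the limit of the quotient of derivatives
  have hg0 : HasDerivAt (fun x : ℝ => (x + 2*b) ^ (-p)) (-p * (2*b) ^ (-p - 1)) 0 := by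
    have h0 := Real.hasDerivAt_rpow_const (x := (0:ℝ) + 2*b) (p := -p)
      (Or.inl (by rw [zero_add]; exact h2b.ne'))
    have h1 : HasDerivAt (fun x : ℝ => x + 2*b) 1 0 := (hasDerivAt_id 0).add_const _
    have h2 := h0.comp 0 h1
    simpa [Function.comp_def] using h2
  have hslope : Tendsto (fun x : ℝ => ((x + 2*b) ^ (-p) - (2*b) ^ (-p)) / x) (𝓝[≠] 0)
      (𝓝 (-p * (2*b) ^ (-p - 1))) := by
    have h := hasDerivAt_iff_tendsto_slope.mp hg0
    refine h.congr fun x => ?_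
    simp [slope_def_field]
  have hxcomp : Tendsto (fun y : ℝ => y ^ (-1/σ)) atTop (𝓝[≠] (0:ℝ)) := by
    rw [tendsto_nhdsWithin_iff]
    constructor
    · simpa [neg_div] using tendsto_rpow_neg_atTop (show (0:ℝ) < 1/σ by positivity)
    · filter_upwards [eventually_gt_atTop 0] with y hy
      exact Set.mem_compl_singleton_iff.mpr (Real.rpow_pos_of_pos hy _).ne'
  have hcomp := (hslope.comp hxcomp).const_mul (K / (3*s*C))
  have hconstval : K / (3*s*C) * (-p * (2*b) ^ (-p - 1)) = -(2*a+1) / (12*b) := by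
    have hT : (2*b) ^ p * (2*b) ^ (-p - 1) = (2*b)⁻¹ := by
      rw [← Real.rpow_add h2b, show p + (-p - 1) = -1 by ring, Real.rpow_neg_one]
    rw [hKeq]
    calc C * s * (2*b) ^ p / (3*s*C) * (-p * (2*b) ^ (-p - 1))
        = (C * s / (3*s*C)) * (-p) * ((2*b) ^ p * (2*b) ^ (-p - 1)) := by ring
      _ = (C * s / (3*s*C)) * (-p) * (2*b)⁻¹ := by rw [hT]
      _ = -(2*a+1) / (12*b) := by
          rw [hpdef]; field_simp; ring
  rw [hconstval] at hcomp
  have hdiv : Tendsto (fun y : ℝ =>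
      (-(f y) - C * (-s * y ^ (-s - 1))) / (C * (-(3*s) * y ^ (-(3*s) - 1))))
      atTop (𝓝 (-(2*a+1) / (12*b))) := by
    refine Tendsto.congr' ?_ hcomp
    filter_upwards [eventually_gt_atTop 1] with y hy
    have hy0 : (0:ℝ) < y := lt_trans one_pos hy
    have hx0 : (0:ℝ) < y ^ (-1/σ) := Real.rpow_pos_of_pos hy0 _
    have h1 : y ^ (-s - 1) = y ^ (-(3*s) - 1) * y ^ (2*s) := by
      rw [← Real.rpow_add hy0]; congr 1; ring
    have hRx : y ^ (2*s) * y ^ (-1/σ) = 1 := by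
      rw [← Real.rpow_add hy0, show 2*s + -1/σ = 0 by rw [hsdef]; field_simp; ring, Real.rpow_zero]
    have haux := aux2 K C s ((y ^ (-1/σ) + 2*b) ^ (-p)) ((2*b) ^ (-p)) (y ^ (-1/σ))
      (y ^ (-(3*s) - 1)) (y ^ (2*s)) hC0.ne' hs0.ne'
      (Real.rpow_pos_of_pos hy0 _).ne' hx0.ne' hCsK hRx
    simp only [Function.comp_apply]
    rw [hfy y hy0, h1]
    exact haux
  -- assemble
  have hlh := HasDerivAt.lhopital_zero_atTop hN' hD' hD'ne hN0 hD0 hdiv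
  refine Tendsto.congr' ?_ hlh
  filter_upwards [eventually_gt_atTop 1] with y hy
  have hy0 : (0:ℝ) < y := lt_trans one_pos hy
  have e2 : y ^ (1/σ) = y ^ (2*s) := by congr 1; rw [hsdef]; field_simp
  have e1 : y ^ (-s) = y ^ (-(3*s)) * y ^ (2*s) := by
    rw [← Real.rpow_add hy0]; congr 1; ring
  rw [e2]
  exact aux1 _ C _ _ _ hC0.ne' (Real.rpow_pos_of_pos hy0 _).ne'
    (Real.rpow_pos_of_pos hy0 _).ne' e1
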